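/- arXiv:1305.4325 — 2 statements merged into one kernel-verified Lean document; each statement's English description precedes it below -/
import Mathlib

section
/- Let u, v ∈ (ℝ²)^{⊗N} be Kronecker products of standard basis vectors of ℝ², u = ⊗_i u_i, v = ⊗_i v_i, and let a be a real number. Then uᵀ · (⊗_{i=1}^N exp(a·σ^x)) · v = cosh(a)^{d(u,v)'} · sinh(a)^{N − d(u,v)'}, where d(u,v)' = #{i : u_i = v_i}. Equivalently, this equals sinh(a)^N · exp( d(u,v)' · log coth(a) ) when a > 0. -/
open Matrix

/-- The Pauli-x matrix `((0,1),(1,0))`. -/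
noncomputable def pauliX : Matrix (Fin 2) (Fin 2) ℝ := !![0, 1; 1, 0]

/-- The `N`-fold Kronecker product of `2×2` matrices, as a matrix indexed by
`Fin N → Fin 2`. -/
noncomputable def tensorN {N : ℕ} (A : Fin N → Matrix (Fin 2) (Fin 2) ℝ) :
    Matrix (Fin N → Fin 2) (Fin N → Fin 2) ℝ :=
  fun x y => ∏ i, A i (x i) (y i)

/-- The `N`-fold Kronecker product of vectors in `ℝ²`. -/
noncomputable def tensorVecN {N : ℕ} (u : Fin N → Fin 2 → ℝ) : (Fin N → Fin 2) → ℝ :=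
  fun x => ∏ i, u i (x i)

lemma exp_a_pauliX (a : ℝ) :
    NormedSpace.exp (a • pauliX) =
      !![Real.cosh a, Real.sinh a; Real.sinh a, Real.cosh a] := by
  set U : Matrix (Fin 2) (Fin 2) ℝ := !![1, 1; 1, -1] with hU
  have hUinv : U⁻¹ = (2:ℝ)⁻¹ • U := by
    apply inv_eq_right_inv
    ext i j
    fin_cases i <;> fin_cases j <;>
      simp [hU, Matrix.mul_apply, Fin.sum_univ_two] <;> norm_num
  have hunit : IsUnit U := by
    apply Matrix.isUnit_iff_isUnit_det U |>.mpr
    simp [hU, Matrix.det_fin_two_of]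
    norm_num
  have hconj : a • pauliX = U * Matrix.diagonal ![a, -a] * U⁻¹ := by
    rw [hUinv]
    ext i j
    fin_cases i <;> fin_cases j <;>
      simp [hU, pauliX, Matrix.mul_apply, Fin.sum_univ_two, Matrix.diagonal_apply,
        Matrix.vecHead, Matrix.vecTail, Matrix.vecMul_diagonal, Pi.coe_exp] <;> ring
  rw [hconj, Matrix.exp_conj U _ hunit, Matrix.exp_diagonal, hUinv]
  ext i j
  fin_cases i <;> fin_cases j <;>
    simp [hU, Matrix.mul_apply, Fin.sum_univ_two, Matrix.diagonal_apply, Matrix.vecHead,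
      Matrix.vecTail, Matrix.vecMul_diagonal, Pi.coe_exp, ← Real.exp_eq_exp_ℝ,
      Real.cosh_eq, Real.sinh_eq] <;> ring

lemma tensorVecN_single {N : ℕ} (s : Fin N → Fin 2) :
    tensorVecN (fun i => Pi.single (s i) (1 : ℝ)) = fun x => if x = s then 1 else 0 := by
  funext x
  by_cases h : x = s
  · subst h; simp [tensorVecN]
  · obtain ⟨i, hi⟩ : ∃ i, x i ≠ s i := by simpa [funext_iff] using h
    rw [if_neg h]
    exact Finset.prod_eq_zero (Finset.mem_univ i)
      (by simpa using Pi.single_eq_of_ne hi 1)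

lemma dot_reduce {N : ℕ} (s t : Fin N → Fin 2) (E : Matrix (Fin 2) (Fin 2) ℝ) :
    tensorVecN (fun i => Pi.single (s i) (1 : ℝ)) ⬝ᵥ
        (tensorN fun _ => E).mulVec (tensorVecN fun i => Pi.single (t i) (1 : ℝ)) =
      ∏ i, E (s i) (t i) := by
  rw [tensorVecN_single, tensorVecN_single]
  simp [dotProduct, mulVec, tensorN, mul_comm]

/-- Lemma 2 (trace_quantum): for Kronecker products of standard basis vectors
`u = ⊗ᵢ e_{s i}`, `v = ⊗ᵢ e_{t i}`,
`uᵀ (⊗ᵢ exp (a σˣ)) v = cosh(a)^d · sinh(a)^(N−d)` where `d = #{i : s i = t i}`;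
for `a > 0` this equals `sinh(a)^N · exp (d · log (coth a))`. -/
theorem tensor_exp_pauliX_basis {N : ℕ} (a : ℝ) (s t : Fin N → Fin 2) :
    (tensorVecN (fun i => Pi.single (s i) (1 : ℝ)) ⬝ᵥ
        (tensorN fun _ => NormedSpace.exp (a • pauliX)).mulVec
          (tensorVecN fun i => Pi.single (t i) (1 : ℝ)) =
      Real.cosh a ^ (Finset.univ.filter fun i => s i = t i).card *
        Real.sinh a ^ (N - (Finset.univ.filter fun i => s i = t i).card)) ∧
    (0 < a →
      tensorVecN (fun i => Pi.single (s i) (1 : ℝ)) ⬝ᵥ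
          (tensorN fun _ => NormedSpace.exp (a • pauliX)).mulVec
            (tensorVecN fun i => Pi.single (t i) (1 : ℝ)) =
        Real.sinh a ^ N *
          Real.exp (((Finset.univ.filter fun i => s i = t i).card : ℝ) *
            Real.log (Real.cosh a / Real.sinh a))) := by
  set d := (Finset.univ.filter fun i => s i = t i).card with hd
  have hdN : d ≤ N := by
    rw [hd]
    simpa using Finset.card_filter_le Finset.univ (fun i => s i = t i)
  have hentry : ∀ p q : Fin 2,
      (!![Real.cosh a, Real.sinh a; Real.sinh a, Real.cosh a]) p q =
        if p = q then Real.cosh a else Real.sinh a := by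
    intro p q; fin_cases p <;> fin_cases q <;> simp
  have h1 : tensorVecN (fun i => Pi.single (s i) (1 : ℝ)) ⬝ᵥ
        (tensorN fun _ => NormedSpace.exp (a • pauliX)).mulVec
          (tensorVecN fun i => Pi.single (t i) (1 : ℝ)) =
      Real.cosh a ^ d * Real.sinh a ^ (N - d) := by
    rw [dot_reduce, exp_a_pauliX]
    have hcard : (Finset.filter (fun i => ¬ s i = t i) Finset.univ).card = N - d := by
      have := Finset.card_filter_add_card_filter_not
        (s := (Finset.univ : Finset (Fin N))) (p := fun i => s i = t i)
      simp only [Finset.card_univ, Fintype.card_fin] at this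
      omega
    rw [Finset.prod_congr rfl fun i _ => hentry (s i) (t i), Finset.prod_ite,
      Finset.prod_const, Finset.prod_const, hcard]
  refine ⟨h1, fun ha => ?_⟩
  rw [h1]
  have hs : 0 < Real.sinh a := Real.sinh_pos_iff.mpr ha
  have hc : 0 < Real.cosh a := Real.cosh_pos a
  have h2 : Real.exp ((d : ℝ) * Real.log (Real.cosh a / Real.sinh a)) =
      (Real.cosh a / Real.sinh a) ^ d := by
    rw [Real.exp_nat_mul, Real.exp_log (div_pos hc hs)]
  rw [h2, div_pow, pow_sub₀ _ (ne_of_gt hs) hdN]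
  field_simp
end

section
/- Let B be an N×N matrix with entries in {0,1} satisfying: (1) B is symmetric, (2) B_{ii} = 1 for all i, and (3) for all i, l, the normalized rows satisfy (B_i/|B_i|)·(B_l/|B_l|) ∈ {0, 1} (inner product of unit-normalized rows is 0 or 1). Then the relation i ~ l defined by B_{il} = 1 is an equivalence relation on {1,...,N}, and hence B determines a partition of {1,...,N}. -/
open Matrix RealInnerProductSpace

/-- The paper's "seating conditions": if an `N×N` 0/1 matrix `B` is symmetric, has
unit diagonal, and any two unit-normalized rows have inner product `0` or `1`, then
the relation `i ~ l ↔ B i l = 1` is an equivalence relation on `{1, …, N}`. -/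
theorem seating_conditions_equivalence {N : ℕ} (B : Matrix (Fin N) (Fin N) ℝ)
    (h01 : ∀ i l, B i l = 0 ∨ B i l = 1)
    (hsymm : ∀ i l, B i l = B l i)
    (hdiag : ∀ i, B i i = 1)
    (hrows : ∀ i l,
      ((∑ n, B i n * B l n) /
          (Real.sqrt (∑ n, B i n ^ 2) * Real.sqrt (∑ n, B l n ^ 2))) = 0 ∨
      ((∑ n, B i n * B l n) /
          (Real.sqrt (∑ n, B i n ^ 2) * Real.sqrt (∑ n, B l n ^ 2))) = 1) :
    Equivalence (fun i l : Fin N => B i l = 1) := by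
  have hnn : ∀ i n, 0 ≤ B i n := by
    intro i n; rcases h01 i n with h | h <;> simp [h]
  have hsum_pos : ∀ i, 0 < ∑ n, B i n ^ 2 := by
    intro i
    have h1 : B i i ^ 2 ≤ ∑ n, B i n ^ 2 :=
      Finset.single_le_sum (f := fun n => B i n ^ 2)
        (fun n _ => sq_nonneg _) (Finset.mem_univ i)
    rw [hdiag i] at h1; linarith
  have key : ∀ i l, B i l = 1 → ∀ n, B i n = B l n := by
    intro i l h
    have hip : 0 < ∑ n, B i n * B l n := by
      have h1 : B i l * B l l ≤ ∑ n, B i n * B l n :=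
        Finset.single_le_sum (f := fun n => B i n * B l n)
          (fun n _ => mul_nonneg (hnn i n) (hnn l n)) (Finset.mem_univ l)
      rw [h, hdiag l] at h1; linarith
    have hdpos : 0 < Real.sqrt (∑ n, B i n ^ 2) * Real.sqrt (∑ n, B l n ^ 2) :=
      mul_pos (Real.sqrt_pos.2 (hsum_pos i)) (Real.sqrt_pos.2 (hsum_pos l))
    have heq : (∑ n, B i n * B l n) =
        Real.sqrt (∑ n, B i n ^ 2) * Real.sqrt (∑ n, B l n ^ 2) := by
      rcases hrows i l with hr | hr
      · exact absurd hr (div_pos hip hdpos).ne'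
      · rw [div_eq_one_iff_eq hdpos.ne'] at hr; linarith
    -- reinterpret in EuclideanSpace
    set x : EuclideanSpace ℝ (Fin N) := (WithLp.equiv 2 _).symm (B i) with hx
    set y : EuclideanSpace ℝ (Fin N) := (WithLp.equiv 2 _).symm (B l) with hy
    have hinner : (inner ℝ x y : ℝ) = ∑ n, B i n * B l n := by
      simp [PiLp.inner_apply, x, y, mul_comm]
    have hnx : ‖x‖ = Real.sqrt (∑ n, B i n ^ 2) := by
      rw [EuclideanSpace.norm_eq]
      simp [x, sq_abs, sq]
    have hny : ‖y‖ = Real.sqrt (∑ n, B l n ^ 2) := by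
      rw [EuclideanSpace.norm_eq]
      simp [y, sq_abs, sq]
    have h2 : (inner ℝ x y : ℝ) = ‖x‖ * ‖y‖ := by rw [hinner, hnx, hny, heq]
    have h3 := inner_eq_norm_mul_iff_real.1 h2
    have h4 : ∀ n, ‖y‖ * B i n = ‖x‖ * B l n := by
      intro n
      have := congrFun (congrArg (WithLp.equiv 2 (Fin N → ℝ)) h3) n
      simpa [x, y] using this
    have hxy : ‖y‖ = ‖x‖ := by
      have := h4 i
      rw [hdiag i, hsymm l i, h] at this; linarith
    have hxpos : 0 < ‖x‖ := by rw [hnx]; exact Real.sqrt_pos.2 (hsum_pos i)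
    intro n
    have := h4 n
    rw [hxy] at this
    exact mul_left_cancel₀ hxpos.ne' this
  refine ⟨fun i => hdiag i, ?_, ?_⟩
  · intro i l h; rw [hsymm l i]; exact h
  · intro i j k hij hjk
    rw [key i j hij k]; exact hjk
end
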